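/- RT¹₂ ≰_gW C_ℕ; that is, Player 2 has no computable winning strategy for the reduction game G(C_ℕ → RT¹₂) over the standard natural numbers. -/

import Mathlib

/-!
A deep embedding of second-order arithmetic (with Henkin/two-sorted first-order semantics),
Π¹₂-problems, and the reduction games of Hirschfeldt–Jockusch type.

Provability `Proves Γ φ` is rendered as semantic consequence over all (Henkin) models;
by the Gödel completeness theorem for (two-sorted) first-order logic this coincides with
derivability from `Γ`.
-/

namespace SOA

/-- An `L₁`-structure (a structure in the language of first-order arithmetic). -/
structure L1Struc where
  carrier : Type
  zero : carrier
  one : carrier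
  add : carrier → carrier → carrier
  mul : carrier → carrier → carrier
  lt : carrier → carrier → Prop

/-- The standard natural numbers as an `L₁`-structure. -/
abbrev stdM : L1Struc where
  carrier := ℕ
  zero := 0
  one := 1
  add := (· + ·)
  mul := (· * ·)
  lt := (· < ·)

/-- Number terms of `L₁`/`L₂`, with named variables. -/
inductive Term : Type where
  | var : ℕ → Term
  | zero : Term
  | one : Term
  | add : Term → Term → Term
  | mul : Term → Term → Term

def Term.val (M : L1Struc) (v : ℕ → M.carrier) : Term → M.carrier
  | .var i => v i
  | .zero => M.zero
  | .one => M.one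
  | .add t s => M.add (t.val M v) (s.val M v)
  | .mul t s => M.mul (t.val M v) (s.val M v)

def Term.fv : Term → Set ℕ
  | .var i => {i}
  | .zero => ∅
  | .one => ∅
  | .add t s => t.fv ∪ s.fv
  | .mul t s => t.fv ∪ s.fv

/-- Formulas of `L₂`; number variables and set variables are indexed by `ℕ`. -/
inductive Formula : Type where
  | eq : Term → Term → Formula
  | lt : Term → Term → Formula
  | mem : Term → ℕ → Formula
  | not : Formula → Formula
  | and : Formula → Formula → Formula
  | or : Formula → Formula → Formula
  | imp : Formula → Formula → Formula
  | allN : ℕ → Formula → Formula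
  | exN : ℕ → Formula → Formula
  | allS : ℕ → Formula → Formula
  | exS : ℕ → Formula → Formula

def Formula.iff (φ ψ : Formula) : Formula := (φ.imp ψ).and (ψ.imp φ)

/-- Tarskian satisfaction; set quantifiers range over the second-order domain `D`. -/
def Formula.Sat (M : L1Struc) (D : Set (Set M.carrier)) :
    (ℕ → M.carrier) → (ℕ → Set M.carrier) → Formula → Prop
  | v, _, .eq t s => t.val M v = s.val M v
  | v, _, .lt t s => M.lt (t.val M v) (s.val M v)
  | v, V, .mem t X => t.val M v ∈ V X
  | v, V, .not φ => ¬ Formula.Sat M D v V φ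
  | v, V, .and φ ψ => Formula.Sat M D v V φ ∧ Formula.Sat M D v V ψ
  | v, V, .or φ ψ => Formula.Sat M D v V φ ∨ Formula.Sat M D v V ψ
  | v, V, .imp φ ψ => Formula.Sat M D v V φ → Formula.Sat M D v V ψ
  | v, V, .allN x φ => ∀ a : M.carrier, Formula.Sat M D (Function.update v x a) V φ
  | v, V, .exN x φ => ∃ a : M.carrier, Formula.Sat M D (Function.update v x a) V φ
  | v, V, .allS X φ => ∀ A ∈ D, Formula.Sat M D v (Function.update V X A) φ
  | v, V, .exS X φ => ∃ A ∈ D, Formula.Sat M D v (Function.update V X A) φ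

/-- Free number variables. -/
def Formula.numFV : Formula → Set ℕ
  | .eq t s => t.fv ∪ s.fv
  | .lt t s => t.fv ∪ s.fv
  | .mem t _ => t.fv
  | .not φ => φ.numFV
  | .and φ ψ => φ.numFV ∪ ψ.numFV
  | .or φ ψ => φ.numFV ∪ ψ.numFV
  | .imp φ ψ => φ.numFV ∪ ψ.numFV
  | .allN x φ => φ.numFV \ {x}
  | .exN x φ => φ.numFV \ {x}
  | .allS _ φ => φ.numFV
  | .exS _ φ => φ.numFV

/-- Free set variables. -/
def Formula.setFV : Formula → Set ℕ
  | .eq _ _ => ∅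
  | .lt _ _ => ∅
  | .mem _ X => {X}
  | .not φ => φ.setFV
  | .and φ ψ => φ.setFV ∪ ψ.setFV
  | .or φ ψ => φ.setFV ∪ ψ.setFV
  | .imp φ ψ => φ.setFV ∪ ψ.setFV
  | .allN _ φ => φ.setFV
  | .exN _ φ => φ.setFV
  | .allS X φ => φ.setFV \ {X}
  | .exS X φ => φ.setFV \ {X}

/-- Arithmetic formulas: no set quantifiers (set variables may occur free). -/
def Formula.IsArithmetic : Formula → Prop
  | .eq _ _ => True
  | .lt _ _ => True
  | .mem _ _ => True
  | .not φ => φ.IsArithmetic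
  | .and φ ψ => φ.IsArithmetic ∧ ψ.IsArithmetic
  | .or φ ψ => φ.IsArithmetic ∧ ψ.IsArithmetic
  | .imp φ ψ => φ.IsArithmetic ∧ ψ.IsArithmetic
  | .allN _ φ => φ.IsArithmetic
  | .exN _ φ => φ.IsArithmetic
  | .allS _ _ => False
  | .exS _ _ => False

/-- Δ⁰₀ (bounded) formulas. -/
inductive IsDelta0 : Formula → Prop
  | eq (t s : Term) : IsDelta0 (.eq t s)
  | lt (t s : Term) : IsDelta0 (.lt t s)
  | mem (t : Term) (X : ℕ) : IsDelta0 (.mem t X)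
  | not {φ} : IsDelta0 φ → IsDelta0 (.not φ)
  | and {φ ψ} : IsDelta0 φ → IsDelta0 ψ → IsDelta0 (.and φ ψ)
  | or {φ ψ} : IsDelta0 φ → IsDelta0 ψ → IsDelta0 (.or φ ψ)
  | imp {φ ψ} : IsDelta0 φ → IsDelta0 ψ → IsDelta0 (.imp φ ψ)
  | ballLt {φ} (x : ℕ) (t : Term) : x ∉ t.fv → IsDelta0 φ →
      IsDelta0 (.allN x (.imp (.lt (.var x) t) φ))
  | bexLt {φ} (x : ℕ) (t : Term) : x ∉ t.fv → IsDelta0 φ →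
      IsDelta0 (.exN x (.and (.lt (.var x) t) φ))

/-- Σ⁰₁ formulas: existential number quantifiers over a Δ⁰₀ matrix. -/
inductive IsSigma01 : Formula → Prop
  | delta0 {φ} : IsDelta0 φ → IsSigma01 φ
  | exN {φ} (x : ℕ) : IsSigma01 φ → IsSigma01 (.exN x φ)

/-- Π⁰₁ formulas. -/
inductive IsPi01 : Formula → Prop
  | delta0 {φ} : IsDelta0 φ → IsPi01 φ
  | allN {φ} (x : ℕ) : IsPi01 φ → IsPi01 (.allN x φ)

/-- Σ⁰₂ formulas. -/
inductive IsSigma02 : Formula → Prop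
  | pi01 {φ} : IsPi01 φ → IsSigma02 φ
  | exN {φ} (x : ℕ) : IsSigma02 φ → IsSigma02 (.exN x φ)

/-- Π¹₁ formulas: universal set quantifiers over an arithmetic matrix. -/
inductive IsPi11 : Formula → Prop
  | arith {φ} : φ.IsArithmetic → IsPi11 φ
  | allS {φ} (X : ℕ) : IsPi11 φ → IsPi11 (.allS X φ)

/-- Quantifier-free `L₁`-formulas (no set variables, no quantifiers). -/
inductive IsQFL1 : Formula → Prop
  | eq (t s : Term) : IsQFL1 (.eq t s)
  | lt (t s : Term) : IsQFL1 (.lt t s)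
  | not {φ} : IsQFL1 φ → IsQFL1 (.not φ)
  | and {φ ψ} : IsQFL1 φ → IsQFL1 ψ → IsQFL1 (.and φ ψ)
  | or {φ ψ} : IsQFL1 φ → IsQFL1 ψ → IsQFL1 (.or φ ψ)
  | imp {φ ψ} : IsQFL1 φ → IsQFL1 ψ → IsQFL1 (.imp φ ψ)

/-- Existential `L₁`-formulas. -/
inductive IsExistentialL1 : Formula → Prop
  | qf {φ} : IsQFL1 φ → IsExistentialL1 φ
  | exN {φ} (x : ℕ) : IsExistentialL1 φ → IsExistentialL1 (.exN x φ)

def Term.subst (x : ℕ) (t : Term) : Term → Term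
  | .var i => if i = x then t else .var i
  | .zero => .zero
  | .one => .one
  | .add a b => .add (Term.subst x t a) (Term.subst x t b)
  | .mul a b => .mul (Term.subst x t a) (Term.subst x t b)

/-- Substitution of the term `t` for the number variable `x` (used only with terms all of
whose variables are `x` itself, where it is capture-free). -/
def Formula.substN (x : ℕ) (t : Term) : Formula → Formula
  | .eq a b => .eq (Term.subst x t a) (Term.subst x t b)
  | .lt a b => .lt (Term.subst x t a) (Term.subst x t b)
  | .mem a X => .mem (Term.subst x t a) X
  | .not φ => .not (φ.substN x t)
  | .and φ ψ => .and (φ.substN x t) (ψ.substN x t)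
  | .or φ ψ => .or (φ.substN x t) (ψ.substN x t)
  | .imp φ ψ => .imp (φ.substN x t) (ψ.substN x t)
  | .allN y φ => if y = x then .allN y φ else .allN y (φ.substN x t)
  | .exN y φ => if y = x then .exN y φ else .exN y (φ.substN x t)
  | .allS X φ => .allS X (φ.substN x t)
  | .exS X φ => .exS X (φ.substN x t)

/-- `(M,S)` is a model of the theory `Γ` (schemes are read with free variables as
universally quantified parameters). -/
def Models2 (M : L1Struc) (S : Set (Set M.carrier)) (Γ : Set Formula) : Prop :=
  ∀ φ ∈ Γ, ∀ (v : ℕ → M.carrier) (V : ℕ → Set M.carrier), (∀ i, V i ∈ S) → φ.Sat M S v V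

/-- `Γ ⊢ φ`, rendered as semantic consequence over all Henkin models (equivalently,
derivability, by the Gödel completeness theorem). -/
def Proves (Γ : Set Formula) (φ : Formula) : Prop :=
  ∀ (M : L1Struc) (S : Set (Set M.carrier)), Models2 M S Γ →
    ∀ (v : ℕ → M.carrier) (V : ℕ → Set M.carrier), (∀ i, V i ∈ S) → φ.Sat M S v V

/-- `Γ` is consistent (has a model). -/
def SemConsistent (Γ : Set Formula) : Prop :=
  ∃ (M : L1Struc) (S : Set (Set M.carrier)), Models2 M S Γ

/-- The Δ⁰₁-comprehension scheme. -/
def Delta01CA : Set Formula :=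
  { F | ∃ (φ₀ φ₁ : Formula) (x X : ℕ), IsSigma01 φ₀ ∧ IsSigma01 φ₁ ∧
      X ∉ φ₀.setFV ∧ X ∉ φ₁.setFV ∧
      F = .imp (.allN x (Formula.iff φ₀ (.not φ₁)))
            (.exS X (.allN x (Formula.iff (.mem (.var x) X) φ₀))) }

/-- The Σ⁰₁-induction scheme. -/
def ISigma01 : Set Formula :=
  { F | ∃ (φ : Formula) (x : ℕ), IsSigma01 φ ∧
      F = .imp (.and (φ.substN x .zero) (.allN x (.imp φ (φ.substN x (.add (.var x) .one)))))
            (.allN x φ) }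

def ax1 : Formula := .not (.eq (.add (.var 0) .one) .zero)
def ax2 : Formula := .imp (.eq (.add (.var 0) .one) (.add (.var 1) .one)) (.eq (.var 0) (.var 1))
def ax3 : Formula := .eq (.add (.var 0) .zero) (.var 0)
def ax4 : Formula := .eq (.add (.var 0) (.add (.var 1) .one)) (.add (.add (.var 0) (.var 1)) .one)
def ax5 : Formula := .eq (.mul (.var 0) .zero) .zero
def ax6 : Formula := .eq (.mul (.var 0) (.add (.var 1) .one)) (.add (.mul (.var 0) (.var 1)) (.var 0))
def ax7 : Formula := .not (.lt (.var 0) .zero)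
def ax8 : Formula :=
  Formula.iff (.lt (.var 0) (.add (.var 1) .one)) (.or (.lt (.var 0) (.var 1)) (.eq (.var 0) (.var 1)))

/-- The basic (PA⁻) axioms of `RCA₀`. -/
def BasicAx : Set Formula := {ax1, ax2, ax3, ax4, ax5, ax6, ax7, ax8}

/-- The theory `RCA₀`. -/
def RCA0 : Set Formula := BasicAx ∪ ISigma01 ∪ Delta01CA

/-- The Σ⁰₂-bounding scheme `BΣ⁰₂`. -/
def BSigma02 : Set Formula :=
  { F | ∃ (φ : Formula) (n i k b : ℕ), IsSigma02 φ ∧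
      n ∉ φ.numFV ∧ b ∉ φ.numFV ∧
      n ≠ i ∧ n ≠ k ∧ n ≠ b ∧ i ≠ k ∧ i ≠ b ∧ k ≠ b ∧
      F = .allN n (.imp (.allN i (.imp (.lt (.var i) (.var n)) (.exN k φ)))
            (.exN b (.allN i (.imp (.lt (.var i) (.var n))
              (.exN k (.and (.or (.lt (.var k) (.var b)) (.eq (.var k) (.var b))) φ)))))) }

/-- The Π¹₁ sentences true in the standard model `(ℕ, 𝒫(ℕ))`. -/
def TruePi11 : Set Formula :=
  { φ | IsPi11 φ ∧ φ.numFV = ∅ ∧ φ.setFV = ∅ ∧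
        φ.Sat stdM Set.univ (fun _ => stdM.zero) (fun _ => (∅ : Set stdM.carrier)) }

/-- `Γ` is an extension of Δ⁰₁-comprehension by Π¹₁ formulas. -/
def ExtByPi11 (Γ : Set Formula) : Prop :=
  Delta01CA ⊆ Γ ∧ ∀ φ ∈ Γ, φ ∈ Delta01CA ∨ IsPi11 φ

/-! ### Π¹₂-problems -/

/-- A Π¹₂-problem, given by arithmetic formulas `Θ(X)` (set variable `0`) and
`Ψ(X,Y)` (set variables `0`, `1`). -/
structure Pi12Problem where
  theta : Formula
  psi : Formula

def Pi12Problem.WellFormed (P : Pi12Problem) : Prop :=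
  P.theta.IsArithmetic ∧ P.psi.IsArithmetic ∧
  P.theta.numFV = ∅ ∧ P.psi.numFV = ∅ ∧
  P.theta.setFV ⊆ {0} ∧ P.psi.setFV ⊆ {0, 1}

/-- `X` is an `M`-instance of `P`. -/
def Pi12Problem.Inst (P : Pi12Problem) (M : L1Struc) (X : Set M.carrier) : Prop :=
  P.theta.Sat M Set.univ (fun _ => M.zero) (fun _ => X)

/-- `Y` is a solution to the `M`-instance `X` of `P`. -/
def Pi12Problem.Sol (P : Pi12Problem) (M : L1Struc) (X Y : Set M.carrier) : Prop :=
  P.psi.Sat M Set.univ (fun _ => M.zero) (fun i => if i = 0 then X else Y)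

/-- The sentence `∀X (Θ(X) → ∃Y Ψ(X,Y))`. -/
def Pi12Problem.toSentence (P : Pi12Problem) : Formula :=
  .allS 0 (.imp P.theta (.exS 1 P.psi))

/-! ### Δ⁰₁-definability, `M[X₀,…,Xₙ]`, consistency with a theory -/

/-- `X` is Δ⁰₁-definable over `M` with number parameters and set parameters from `Ps`. -/
def Delta1Def (M : L1Struc) (Ps : Set (Set M.carrier)) (X : Set M.carrier) : Prop :=
  ∃ (φ₀ φ₁ : Formula) (x : ℕ) (v : ℕ → M.carrier) (V : ℕ → Set M.carrier),
    IsSigma01 φ₀ ∧ IsSigma01 φ₁ ∧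
    (∀ i ∈ φ₀.setFV ∪ φ₁.setFV, V i ∈ Ps) ∧
    (∀ a, φ₀.Sat M Set.univ (Function.update v x a) V ↔
          ¬ φ₁.Sat M Set.univ (Function.update v x a) V) ∧
    X = {a | φ₀.Sat M Set.univ (Function.update v x a) V}

/-- The second-order part of `M[X₀,…,Xₙ]` for `Ps = {X₀,…,Xₙ}`. -/
def Mcl (M : L1Struc) (Ps : Set (Set M.carrier)) : Set (Set M.carrier) :=
  { X | Delta1Def M Ps X }

def histL (M : L1Struc) (f : ℕ → Set M.carrier) (n : ℕ) : List (Set M.carrier) :=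
  (List.range (n+1)).map f

/-- The structure `M[X₀,…,Xₙ]` determined by a history of Player 1 moves. -/
def Board (M : L1Struc) (hist : List (Set M.carrier)) : Set (Set M.carrier) :=
  Mcl M { X | X ∈ hist }

/-- An `L₂`-structure `(M,S)` is consistent with `Γ`: it is contained in a model of `Γ`
with the same first-order part. -/
def ConsWith (M : L1Struc) (S : Set (Set M.carrier)) (Γ : Set Formula) : Prop :=
  ∃ T, S ⊆ T ∧ Models2 M T Γ

/-- `S` is closed under Δ⁰₁-comprehension (with parameters from `S`). -/
def D01Closed (M : L1Struc) (S : Set (Set M.carrier)) : Prop :=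
  ∀ X, Delta1Def M S X → X ∈ S

/-- The join `X ⊕ Y` inside `M`. -/
def joinM (M : L1Struc) (X Y : Set M.carrier) : Set M.carrier :=
  { c | (∃ a ∈ X, c = M.add a a) ∨ (∃ a ∈ Y, c = M.add (M.add a a) M.one) }

/-- `X₀ ⊕ X₁ ⊕ ⋯ ⊕ Xₙ` (associated to the left). -/
def joinList (M : L1Struc) : List (Set M.carrier) → Set M.carrier
  | [] => ∅
  | X :: rest => rest.foldl (joinM M) X

/-- Numerals in `M`. -/
def numM (M : L1Struc) : ℕ → M.carrier
  | 0 => M.zero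
  | n+1 => M.add (numM M n) M.one

/-! ### Reduction games

A run is given by Player 1's moves `f 0, f 1, …` and Player 2's moves `g 0, g 1, …`,
where `g n` is Player 2's reply (a victory flag together with a set) to `f 0, …, f n`.
`C` is the side condition on Player 1's histories (consistency with `Γ` for `G^Γ`,
membership in `S` for the modified game `Ĝ^Γ`, trivial for the game over `ω`). -/

/-- The run is still alive after Player 1's move at stage `n` (all moves so far legal,
Player 2 has not yet declared victory). -/
def Alive (P Q : Pi12Problem) (M : L1Struc) (C : List (Set M.carrier) → Prop)
    (f : ℕ → Set M.carrier) (g : ℕ → Prop × Set M.carrier) : ℕ → Prop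
  | 0 => P.Inst M (f 0) ∧ C (histL M f 0)
  | n+1 => Alive P Q M C f g n ∧ ¬ (g n).1 ∧ (g n).2 ∈ Board M (histL M f n) ∧
      Q.Inst M ((g n).2) ∧ Q.Sol M ((g n).2) (f (n+1)) ∧ C (histL M f (n+1))

/-- Player 2's move at stage `n` is a legal winning move. -/
def P2WinMove (P : Pi12Problem) (M : L1Struc) (f : ℕ → Set M.carrier)
    (g : ℕ → Prop × Set M.carrier) (n : ℕ) : Prop :=
  (g n).1 ∧ (g n).2 ∈ Board M (histL M f n) ∧ P.Sol M (f 0) ((g n).2)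

/-- Player 2's move at stage `n` is a legal continuing move (an instance of `Q`). -/
def P2ContMove (Q : Pi12Problem) (M : L1Struc) (f : ℕ → Set M.carrier)
    (g : ℕ → Prop × Set M.carrier) (n : ℕ) : Prop :=
  ¬ (g n).1 ∧ (g n).2 ∈ Board M (histL M f n) ∧ Q.Inst M ((g n).2)

/-- Player 2 wins the run `(f,g)`: its moves are always legal while the run is alive, and
the run does not go on forever. -/
def P2WinsRun (P Q : Pi12Problem) (M : L1Struc) (C : List (Set M.carrier) → Prop)
    (f : ℕ → Set M.carrier) (g : ℕ → Prop × Set M.carrier) : Prop :=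
  (∀ n, Alive P Q M C f g n → (P2ContMove Q M f g n ∨ P2WinMove P M f g n)) ∧
  ¬ (∀ n, Alive P Q M C f g n)

/-- Player 2 wins the run `(f,g)` within at most `n₀` moves. -/
def P2WinsRunWithin (P Q : Pi12Problem) (M : L1Struc) (C : List (Set M.carrier) → Prop)
    (f : ℕ → Set M.carrier) (g : ℕ → Prop × Set M.carrier) (n₀ : ℕ) : Prop :=
  (∀ n, Alive P Q M C f g n → (P2ContMove Q M f g n ∨ P2WinMove P M f g n)) ∧
  ¬ Alive P Q M C f g n₀

/-- Side condition for `G^Γ`: each `M[X₀,…,Xₙ]` must be consistent with `Γ`. -/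
def CondG (Γ : Set Formula) (M : L1Struc) (hist : List (Set M.carrier)) : Prop :=
  ConsWith M (Board M hist) Γ

/-- Side condition for `Ĝ^Γ`: Player 1's moves must lie in `S`. -/
def CondS (M : L1Struc) (S : Set (Set M.carrier)) (hist : List (Set M.carrier)) : Prop :=
  ∀ X ∈ hist, X ∈ S

/-- Player 2 has a winning strategy for `G^Γ(Q → P)`. -/
def P2HasWinG (Γ : Set Formula) (P Q : Pi12Problem) : Prop :=
  ∃ σ : (M : L1Struc) → List (Set M.carrier) → Prop × Set M.carrier,
    ∀ M : L1Struc, Countable M.carrier → ∀ f,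
      P2WinsRun P Q M (CondG Γ M) f (fun n => σ M (histL M f n))

/-- Player 2 has a winning strategy for `G^Γ(Q → P)` ensuring victory within `n₀` moves. -/
def P2HasWinGWithin (Γ : Set Formula) (P Q : Pi12Problem) (n₀ : ℕ) : Prop :=
  ∃ σ : (M : L1Struc) → List (Set M.carrier) → Prop × Set M.carrier,
    ∀ M : L1Struc, Countable M.carrier → ∀ f,
      P2WinsRunWithin P Q M (CondG Γ M) f (fun n => σ M (histL M f n)) n₀

/-- Player 2 has a winning strategy for the modified game `Ĝ^Γ(Q → P)`. -/
def P2HasWinHat (Γ : Set Formula) (P Q : Pi12Problem) : Prop :=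
  ∃ σ : (M : L1Struc) → Set (Set M.carrier) → List (Set M.carrier) → Prop × Set M.carrier,
    ∀ (M : L1Struc) (S : Set (Set M.carrier)), Countable M.carrier →
      Models2 M S Γ → D01Closed M S → ∀ f,
        P2WinsRun P Q M (CondS M S) f (fun n => σ M S (histL M f n))

/-- Player 2 has a winning strategy for `Ĝ^Γ(Q → P)` ensuring victory within `n₀` moves. -/
def P2HasWinHatWithin (Γ : Set Formula) (P Q : Pi12Problem) (n₀ : ℕ) : Prop :=
  ∃ σ : (M : L1Struc) → Set (Set M.carrier) → List (Set M.carrier) → Prop × Set M.carrier,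
    ∀ (M : L1Struc) (S : Set (Set M.carrier)), Countable M.carrier →
      Models2 M S Γ → D01Closed M S → ∀ f,
        P2WinsRunWithin P Q M (CondS M S) f (fun n => σ M S (histL M f n)) n₀

/-- A strategy for Player 1 in `G^Γ`. -/
structure P1StratG where
  M : L1Struc
  first : Set M.carrier
  next : List (Prop × Set M.carrier) → Set M.carrier

def P1StratG.play (τ : P1StratG) (g : ℕ → Prop × Set τ.M.carrier) : ℕ → Set τ.M.carrier
  | 0 => τ.first
  | n+1 => τ.next ((List.range (n+1)).map g)

/-- Player 1 wins the run `(f,g)`: the first move is legal, Player 2 never makes a legal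
winning move, and Player 1 can always respond legally. -/
def P1WinsRun (P Q : Pi12Problem) (M : L1Struc) (C : List (Set M.carrier) → Prop)
    (f : ℕ → Set M.carrier) (g : ℕ → Prop × Set M.carrier) : Prop :=
  Alive P Q M C f g 0 ∧
  ∀ n, Alive P Q M C f g n →
    (¬ P2WinMove P M f g n ∧ (P2ContMove Q M f g n → Alive P Q M C f g (n+1)))

/-- Player 1 has a winning strategy for `G^Γ(Q → P)`. -/
def P1HasWinG (Γ : Set Formula) (P Q : Pi12Problem) : Prop :=
  ∃ τ : P1StratG, Countable τ.M.carrier ∧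
    ∀ g, P1WinsRun P Q τ.M (CondG Γ τ.M) (τ.play g) g

/-- A strategy for Player 1 in the modified game `Ĝ^Γ` (its first move includes a model `(M,S)`). -/
structure P1StratHat where
  M : L1Struc
  S : Set (Set M.carrier)
  first : Set M.carrier
  next : List (Prop × Set M.carrier) → Set M.carrier

def P1StratHat.play (τ : P1StratHat) (g : ℕ → Prop × Set τ.M.carrier) : ℕ → Set τ.M.carrier
  | 0 => τ.first
  | n+1 => τ.next ((List.range (n+1)).map g)

/-- Player 1 has a winning strategy for `Ĝ^Γ(Q → P)`. -/
def P1HasWinHat (Γ : Set Formula) (P Q : Pi12Problem) : Prop :=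
  ∃ τ : P1StratHat, Countable τ.M.carrier ∧ Models2 τ.M τ.S Γ ∧ D01Closed τ.M τ.S ∧
    ∀ g, P1WinsRun P Q τ.M (CondS τ.M τ.S) (τ.play g) g

/-! ### Universal Σ⁰₁ formulas and the functionals `Φₑ` -/

/-- Cantor pairing, as a relation in `M`: `e = ⟨i,j⟩` iff `2e = (i+j)² + (i+j) + 2i`. -/
def cantorPairRel (M : L1Struc) (i j e : M.carrier) : Prop :=
  M.add e e = M.add (M.add (M.mul (M.add i j) (M.add i j)) (M.add i j)) (M.add i i)

/-- Satisfaction of `θ(i, n, X)` (number variables `0`, `1`; set variable `0`). -/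
def satIdx (θ : Formula) (M : L1Struc) (i n : M.carrier) (X : Set M.carrier) : Prop :=
  θ.Sat M Set.univ (fun m => if m = 0 then i else if m = 1 then n else M.zero) (fun _ => X)

/-- `Y = Φₑ^X` in `M`, relative to the universal Σ⁰₁ formula `θ`. -/
def IsPhi (θ : Formula) (M : L1Struc) (e : M.carrier) (X Y : Set M.carrier) : Prop :=
  ∃ i j : M.carrier, cantorPairRel M i j e ∧
    (∀ n, satIdx θ M i n X ↔ ¬ satIdx θ M j n X) ∧
    (∀ n, n ∈ Y ↔ satIdx θ M i n X)

def GoodSigma (φ : Formula) : Prop :=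
  IsSigma01 φ ∧ φ.numFV ⊆ {0, 1} ∧ φ.setFV ⊆ {0}

/-- `θ` is a universal Σ⁰₁ formula, provably in `Γ`. -/
def UnivSigma01 (Γ : Set Formula) (θ : Formula) : Prop :=
  GoodSigma θ ∧ ∀ φ, GoodSigma φ →
    ∀ (M : L1Struc) (S : Set (Set M.carrier)), Models2 M S Γ →
      ∀ e : M.carrier, ∃ i : M.carrier, ∀ n : M.carrier, ∀ X ∈ S,
        (satIdx θ M i n X ↔ satIdx φ M e n X)

/-- `θ` is a universal Σ⁰₁ formula over the standard model. -/
def UnivSigma01Std (θ : Formula) : Prop :=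
  GoodSigma θ ∧ ∀ φ, GoodSigma φ →
    ∀ e : stdM.carrier, ∃ i : stdM.carrier, ∀ (n : stdM.carrier) (X : Set stdM.carrier),
      (satIdx θ stdM i n X ↔ satIdx φ stdM e n X)

/-! ### Computable strategies for Player 2 -/

/-- The move prescribed by the computable strategy with index `k` at the given history:
Player 2 plays `Z = Φ_e^{X₀⊕⋯⊕Xₙ}` where `e = Φ_k(n)`; by the coding convention, `Z`
declares victory iff `0 ∈ Z`, with payload `{a : a+1 ∈ Z}`. -/
def CodeMove (θ : Formula) (M : L1Struc) (k : Nat.Partrec.Code)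
    (hist : List (Set M.carrier)) (mv : Prop × Set M.carrier) : Prop :=
  ∃ e : ℕ, e ∈ k.eval (hist.length - 1) ∧
    ∃ Z : Set M.carrier, IsPhi θ M (numM M e) (joinList M hist) Z ∧
      mv = ((M.zero ∈ Z), { a | M.add a M.one ∈ Z })

/-- The computable strategy `k` wins every run of the game over `M` with side condition `C`. -/
def P2CompWinsC (θ : Formula) (k : Nat.Partrec.Code) (P Q : Pi12Problem) (M : L1Struc)
    (C : List (Set M.carrier) → Prop) : Prop :=
  ∀ f g,
    ((∀ n, (∀ m < n, Alive P Q M C f g m → CodeMove θ M k (histL M f m) (g m)) →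
        Alive P Q M C f g n → ∃ mv, CodeMove θ M k (histL M f n) mv) ∧
     ((∀ n, Alive P Q M C f g n → CodeMove θ M k (histL M f n) (g n)) →
        P2WinsRun P Q M C f g))

def P2CompWinsCWithin (θ : Formula) (k : Nat.Partrec.Code) (P Q : Pi12Problem) (M : L1Struc)
    (C : List (Set M.carrier) → Prop) (n₀ : ℕ) : Prop :=
  ∀ f g,
    ((∀ n, (∀ m < n, Alive P Q M C f g m → CodeMove θ M k (histL M f m) (g m)) →
        Alive P Q M C f g n → ∃ mv, CodeMove θ M k (histL M f n) mv) ∧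
     ((∀ n, Alive P Q M C f g n → CodeMove θ M k (histL M f n) (g n)) →
        P2WinsRunWithin P Q M C f g n₀))

/-- Player 2 has a computable winning strategy for `G^Γ(Q → P)`. -/
def P2CompWinsG (Γ : Set Formula) (θ : Formula) (P Q : Pi12Problem) : Prop :=
  ∃ k : Nat.Partrec.Code, ∀ M : L1Struc, Countable M.carrier →
    P2CompWinsC θ k P Q M (CondG Γ M)

def P2CompWinsGWithin (Γ : Set Formula) (θ : Formula) (P Q : Pi12Problem) (n₀ : ℕ) : Prop :=
  ∃ k : Nat.Partrec.Code, ∀ M : L1Struc, Countable M.carrier →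
    P2CompWinsCWithin θ k P Q M (CondG Γ M) n₀

/-- Player 2 has a computable winning strategy for `Ĝ^Γ(Q → P)`. -/
def P2CompWinsHat (Γ : Set Formula) (θ : Formula) (P Q : Pi12Problem) : Prop :=
  ∃ k : Nat.Partrec.Code, ∀ (M : L1Struc) (S : Set (Set M.carrier)), Countable M.carrier →
    Models2 M S Γ → D01Closed M S → P2CompWinsC θ k P Q M (CondS M S)

def P2CompWinsHatWithin (Γ : Set Formula) (θ : Formula) (P Q : Pi12Problem) (n₀ : ℕ) : Prop :=
  ∃ k : Nat.Partrec.Code, ∀ (M : L1Struc) (S : Set (Set M.carrier)), Countable M.carrier →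
    Models2 M S Γ → D01Closed M S → P2CompWinsCWithin θ k P Q M (CondS M S) n₀

/-- Player 2 has a computable winning strategy for the game `G(Q → P)` over the standard
natural numbers. -/
def P2CompWinsStd (θ : Formula) (P Q : Pi12Problem) : Prop :=
  ∃ k : Nat.Partrec.Code, P2CompWinsC θ k P Q stdM (fun _ => True)

def P2CompWinsStdWithin (θ : Formula) (P Q : Pi12Problem) (n₀ : ℕ) : Prop :=
  ∃ k : Nat.Partrec.Code, P2CompWinsCWithin θ k P Q stdM (fun _ => True) n₀

/-- Player 2 has a winning strategy for the game `G(Q → P)` over the standard natural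
numbers ensuring victory within `n₀` moves. -/
def P2HasWinStdWithin (P Q : Pi12Problem) (n₀ : ℕ) : Prop :=
  ∃ σ : List (Set stdM.carrier) → Prop × Set stdM.carrier,
    ∀ f, P2WinsRunWithin P Q stdM (fun _ => True) f (fun n => σ (histL stdM f n)) n₀

/-- `P ≤ω^n Q`: Player 2 wins `G(Q → P)` over `ω` in at most `n+1` moves. -/
def leOmegaN (P Q : Pi12Problem) (n : ℕ) : Prop := P2HasWinStdWithin P Q (n+1)

/-- Weihrauch reducibility over `Γ` (relative to the universal Σ⁰₁ formula `θ`). -/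
def WRed (Γ : Set Formula) (θ : Formula) (P Q : Pi12Problem) : Prop :=
  ∃ e i : ℕ, ∀ (M : L1Struc) (S : Set (Set M.carrier)),
    Countable M.carrier → Models2 M S Γ → D01Closed M S →
    ∀ X ∈ S, P.Inst M X →
      ∃ Xh : Set M.carrier, IsPhi θ M (numM M e) X Xh ∧ Q.Inst M Xh ∧
        ∀ Yh ∈ S, Q.Sol M Xh Yh →
          ∃ Ys : Set M.carrier, IsPhi θ M (numM M i) (joinM M X Yh) Ys ∧ P.Sol M X Ys

/-! ### Runs played according to an arithmetic formula `Λ(X,n,e)` -/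

/-- The run `(f,g)` is played by Player 2 according to `Λ`: at each alive stage `n`, Player 2
plays (the coded move of) `Φ_e^{X₀⊕⋯⊕Xₙ}` for some `e ∈ M` with
`M[X₀,…,Xₙ] ⊨ Λ(X₀⊕⋯⊕Xₙ, n, e)`. -/
def AccordsLambda (θ Λ : Formula) (P Q : Pi12Problem) (M : L1Struc)
    (C : List (Set M.carrier) → Prop) (f : ℕ → Set M.carrier)
    (g : ℕ → Prop × Set M.carrier) : Prop :=
  ∀ n, Alive P Q M C f g n → ∃ (e : M.carrier) (Z : Set M.carrier),
    Λ.Sat M Set.univ (fun m => if m = 0 then numM M n else if m = 1 then e else M.zero)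
      (fun _ => joinList M (histL M f n)) ∧
    IsPhi θ M e (joinList M (histL M f n)) Z ∧
    g n = ((M.zero ∈ Z), { a | M.add a M.one ∈ Z })

/-! ### Semantic rendering of the formulas `Θₙ` and `Δₙ` -/

/-- Satisfaction of the matrix `Θₙ`, given `X₀`, the current join `J`, the pairs
`(e_j, Y_j)` and the remaining `X_{j+1}, …`. -/
def ThetaSat (θ : Formula) (P Q : Pi12Problem) (M : L1Struc) (X0 : Set M.carrier) :
    Set M.carrier → List (M.carrier × Set M.carrier) → List (Set M.carrier) → Prop
  | _, [], _ => True
  | J, [(e, Y)], _ => IsPhi θ M e J Y ∧ P.Sol M X0 Y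
  | _, _ :: _ :: _, [] => True
  | J, (e, Y) :: eY' :: eYs, X :: Xs =>
      IsPhi θ M e J Y ∧ (P.Sol M X0 Y ∨ (Q.Inst M Y ∧ (Q.Sol M Y X →
        ThetaSat θ P Q M X0 (joinM M J X) (eY' :: eYs) Xs)))

def DeltaSatFin (θ : Formula) (P Q : Pi12Problem) (M : L1Struc)
    (Xs : List (Set M.carrier)) (eYs : List (M.carrier × Set M.carrier)) : Prop :=
  match Xs with
  | [] => True
  | X0 :: rest => P.Inst M X0 → ThetaSat θ P Q M X0 X0 eYs rest

def DeltaSatAux (θ : Formula) (P Q : Pi12Problem) (M : L1Struc) (S : Set (Set M.carrier)) :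
    ℕ → List (Set M.carrier) → List (M.carrier × Set M.carrier) → Prop
  | 0, Xs, eYs => DeltaSatFin θ P Q M Xs eYs
  | k+1, Xs, eYs => ∀ X ∈ S, ∃ e : M.carrier, ∃ Y ∈ S,
      DeltaSatAux θ P Q M S k (Xs ++ [X]) (eYs ++ [(e, Y)])

/-- `(M,S) ⊨ Δₙ`, i.e. `∀X₀ ∃e₀,Y₀ ⋯ ∀Xₙ ∃eₙ,Yₙ Θₙ(…)`. -/
def DeltaSat (θ : Formula) (P Q : Pi12Problem) (M : L1Struc) (S : Set (Set M.carrier))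
    (n : ℕ) : Prop :=
  DeltaSatAux θ P Q M S (n+1) [] []

/-! ### Concrete Π¹₂-problems -/

/-- The pairing term `π(t,s) = (t+s)·(t+s) + t`. -/
def pairT (t s : Term) : Term := .add (.mul (.add t s) (.add t s)) t

def Term.ofNat : ℕ → Term
  | 0 => .zero
  | n+1 => .add (Term.ofNat n) .one

def trueF : Formula := .eq .zero .zero

def leF (t s : Term) : Formula := .or (.lt t s) (.eq t s)

/-- "The set variable `s` names an infinite set" (using number variables `a`, `b`). -/
def infiniteF (s a b : ℕ) : Formula :=
  .allN a (.exN b (.and (.lt (.var a) (.var b)) (.mem (.var b) s)))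

/-- `LH`: instances are `c : [ℕ]² → 2` with `lim_y c(x,y) = 1` for all `x`
(coded as the set of codes `π(x,y)`, `x<y`, of pairs colored `1`); solutions are
infinite homogeneous sets. -/
def LH : Pi12Problem where
  theta := .allN 0 (.exN 1 (.allN 2 (.imp (.and (.lt (.var 0) (.var 2)) (.lt (.var 1) (.var 2)))
    (.mem (pairT (.var 0) (.var 2)) 0))))
  psi := .and (infiniteF 1 0 1)
    (.or
      (.allN 0 (.allN 1 (.imp
        (.and (.mem (.var 0) 1) (.and (.mem (.var 1) 1) (.lt (.var 0) (.var 1))))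
        (.mem (pairT (.var 0) (.var 1)) 0))))
      (.allN 0 (.allN 1 (.imp
        (.and (.mem (.var 0) 1) (.and (.mem (.var 1) 1) (.lt (.var 0) (.var 1))))
        (.not (.mem (pairT (.var 0) (.var 1)) 0))))))

/-- `Bound*`: an instance is a simultaneous enumeration of a finite family `F₀,…,F_k` of
bounded sets (marker `π(0,k)`; entries `π(i+1, π(n,s))` meaning `n` enters `F_i` at stage `s`);
a solution is (the singleton of) a common bound. -/
def BoundStar : Pi12Problem where
  theta := .exN 0 (.and (.mem (pairT .zero (.var 0)) 0)
    (.and (.allN 1 (.imp (.mem (pairT .zero (.var 1)) 0) (.eq (.var 1) (.var 0))))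
      (.and (.allN 1 (.imp (.mem (.var 1) 0)
          (.or (.exN 2 (.eq (.var 1) (pairT .zero (.var 2))))
               (.exN 2 (.and (leF (.var 2) (.var 0))
                 (.exN 3 (.exN 4 (.eq (.var 1)
                   (pairT (.add (.var 2) .one) (pairT (.var 3) (.var 4)))))))))))
        (.allN 1 (.imp (leF (.var 1) (.var 0))
          (.exN 2 (.allN 3 (.allN 4 (.imp
            (.mem (pairT (.add (.var 1) .one) (pairT (.var 3) (.var 4))) 0)
            (leF (.var 3) (.var 2)))))))))))
  psi := .exN 0 (.and (.mem (.var 0) 1)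
    (.and (.allN 1 (.imp (.mem (.var 1) 1) (.eq (.var 1) (.var 0))))
      (.allN 1 (.allN 2 (.allN 3 (.imp
        (.mem (pairT (.add (.var 1) .one) (pairT (.var 2) (.var 3))) 0)
        (leF (.var 2) (.var 0))))))))

/-- `stBound*`: an instance is an enumeration of a set `X ⊆ ℕ×ℕ` (entries `π(π(n,k),s)`)
such that `{n : ∃k (n,k) ∈ X}` is bounded and each `{k : (n,k) ∈ X}` is bounded; a solution
is (the singleton of) a bound on `{k : ∃n (n,k) ∈ X}`. -/
def stBoundStar : Pi12Problem where
  theta := .and (.allN 0 (.imp (.mem (.var 0) 0)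
        (.exN 1 (.exN 2 (.exN 3 (.eq (.var 0) (pairT (pairT (.var 1) (.var 2)) (.var 3))))))))
    (.and (.exN 0 (.allN 1 (.allN 2 (.allN 3 (.imp
        (.mem (pairT (pairT (.var 1) (.var 2)) (.var 3)) 0) (leF (.var 1) (.var 0)))))))
      (.allN 1 (.exN 0 (.allN 2 (.allN 3 (.imp
        (.mem (pairT (pairT (.var 1) (.var 2)) (.var 3)) 0) (leF (.var 2) (.var 0))))))))
  psi := .exN 0 (.and (.mem (.var 0) 1)
    (.and (.allN 1 (.imp (.mem (.var 1) 1) (.eq (.var 1) (.var 0))))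
      (.allN 1 (.allN 2 (.allN 3 (.imp
        (.mem (pairT (pairT (.var 1) (.var 2)) (.var 3)) 0)
        (leF (.var 2) (.var 0))))))))

/-- `stRT¹_{<∞}`: instances are functions `c : ℕ → ℕ` with bounded range (coded as sets of
codes `π(x, c(x))`); solutions are infinite sets on which `c` is constant. -/
def stRT1inf : Pi12Problem where
  theta := .and (.allN 0 (.exN 1 (.and (.mem (pairT (.var 0) (.var 1)) 0)
        (.allN 2 (.imp (.mem (pairT (.var 0) (.var 2)) 0) (.eq (.var 2) (.var 1)))))))
    (.exN 1 (.allN 0 (.allN 2 (.imp (.mem (pairT (.var 0) (.var 2)) 0) (leF (.var 2) (.var 1))))))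
  psi := .and (infiniteF 1 0 1)
    (.exN 0 (.allN 1 (.imp (.mem (.var 1) 1) (.mem (pairT (.var 1) (.var 0)) 0))))

/-- `C_ℕ`: an instance is an enumeration of the complement of a nonempty set `A`
(entries `π(n,s)` meaning `n` is enumerated out at stage `s`); a solution is (the singleton
of) an element of `A`. -/
def CN : Pi12Problem where
  theta := .exN 0 (.allN 1 (.not (.mem (pairT (.var 0) (.var 1)) 0)))
  psi := .exN 0 (.and (.mem (.var 0) 1)
    (.and (.allN 1 (.imp (.mem (.var 1) 1) (.eq (.var 1) (.var 0))))
      (.allN 1 (.not (.mem (pairT (.var 0) (.var 1)) 0)))))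

/-- The code `π(x_i, π(x_{i+1}, …, x_{i+c-1}))` of the tuple of variables `i, …, i+c-1`. -/
def varsCode : ℕ → ℕ → Term
  | _, 0 => .zero
  | i, 1 => .var i
  | i, c+2 => pairT (.var i) (varsCode (i+1) (c+1))

/-- `x_i < x_{i+1} < ⋯ < x_{i+c-1}`. -/
def chainLt : ℕ → ℕ → Formula
  | _, 0 => trueF
  | _, 1 => trueF
  | i, c+2 => .and (.lt (.var i) (.var (i+1))) (chainLt (i+1) (c+1))

/-- `x_i ∈ s ∧ ⋯ ∧ x_{i+c-1} ∈ s` (for the set variable `s`). -/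
def allMemS (s : ℕ) : ℕ → ℕ → Formula
  | _, 0 => trueF
  | i, c+1 => .and (.mem (.var i) s) (allMemS s (i+1) c)

/-- `∀ x_i ⋯ ∀ x_{i+c-1} φ`. -/
def allNs : ℕ → ℕ → Formula → Formula
  | _, 0, φ => φ
  | i, c+1, φ => .allN i (allNs (i+1) c φ)

/-- `RTⁿ_k`: instances are colorings `c : [ℕ]ⁿ → k` (coded as sets of codes
`π(⟨x₁,…,xₙ⟩, v)` for `x₁<⋯<xₙ` and `v = c(x₁,…,xₙ) < k`); solutions are infinite
homogeneous sets. -/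
def RTn (n k : ℕ) : Pi12Problem where
  theta := allNs 1 n (.imp (chainLt 1 n)
    (.exN 0 (.and (.lt (.var 0) (Term.ofNat k))
      (.and (.mem (pairT (varsCode 1 n) (.var 0)) 0)
        (.allN (n+1) (.imp (.mem (pairT (varsCode 1 n) (.var (n+1))) 0)
          (.eq (.var (n+1)) (.var 0))))))))
  psi := .and (infiniteF 1 (n+1) (n+2))
    (.exN 0 (.and (.lt (.var 0) (Term.ofNat k))
      (allNs 1 n (.imp (.and (chainLt 1 n) (allMemS 1 1 n))
        (.mem (pairT (varsCode 1 n) (.var 0)) 0)))))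

/-- `RTⁿ_{<∞}`: the number of colors is part of the instance (marker `π(0,k)`, entries
`π(1, π(⟨x₁,…,xₙ⟩, v))`). -/
def RTnInf (n : ℕ) : Pi12Problem where
  theta := .exN 0 (.and (.mem (pairT .zero (.var 0)) 0)
    (.and (.allN (n+1) (.imp (.mem (pairT .zero (.var (n+1))) 0) (.eq (.var (n+1)) (.var 0))))
      (allNs 1 n (.imp (chainLt 1 n)
        (.exN (n+1) (.and (.lt (.var (n+1)) (.var 0))
          (.and (.mem (pairT .one (pairT (varsCode 1 n) (.var (n+1)))) 0)
            (.allN (n+2) (.imp (.mem (pairT .one (pairT (varsCode 1 n) (.var (n+2)))) 0)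
              (.eq (.var (n+2)) (.var (n+1))))))))))))
  psi := .and (infiniteF 1 (n+1) (n+2))
    (.exN (n+1) (allNs 1 n (.imp (.and (chainLt 1 n) (allMemS 1 1 n))
      (.mem (pairT .one (pairT (varsCode 1 n) (.var (n+1)))) 0))))

/-! ### Material for Uftring's example (Statement 11) -/

/-- `G` is (an arithmetization of) a primitive recursive predicate: a Σ⁰₁ formula in the
number variable `0`, `RCA₀`-provably equivalent to a Π⁰₁ formula, whose standard
extension is primitive recursive. -/
def PrimRecPred (G : Formula) : Prop :=
  IsSigma01 G ∧ G.numFV ⊆ {0} ∧ G.setFV = ∅ ∧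
  (∃ π : Formula, IsPi01 π ∧ π.numFV ⊆ {0} ∧ π.setFV = ∅ ∧
      Proves RCA0 (Formula.iff G π)) ∧
  (∃ f : ℕ → Bool, Nat.Primrec (fun m => (f m).toNat) ∧
      ∀ m : ℕ, f m = true ↔
        G.Sat stdM Set.univ (fun i => if i = 0 then m else 0) (fun _ => (∅ : Set ℕ)))

/-- Truth of `G(m)` in the standard model. -/
def satStd1 (G : Formula) (m : ℕ) : Prop :=
  G.Sat stdM Set.univ (fun i => if i = 0 then m else 0) (fun _ => (∅ : Set ℕ))

/-- The problem `P ≡ ∀X ∃Y ∀x G(x)`. -/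
def PGprob (G : Formula) : Pi12Problem where
  theta := trueF
  psi := .allN 0 G

/-- The problem `Q ≡ ∀X [X ≠ ∅ → ∃Y G(μX)]`. -/
def QGprob (G : Formula) : Pi12Problem where
  theta := .exN 0 (.mem (.var 0) 0)
  psi := .exN 0 (.and (.mem (.var 0) 0)
    (.and (.allN 1 (.imp (.lt (.var 1) (.var 0)) (.not (.mem (.var 1) 0)))) G))

/-! ### Material for Statement 13 -/

/-- A model of a sentence (all valuations into `S`). -/
def ModelsSent (M : L1Struc) (S : Set (Set M.carrier)) (φ : Formula) : Prop :=
  ∀ (v : ℕ → M.carrier) (V : ℕ → Set M.carrier), (∀ i, V i ∈ S) → φ.Sat M S v V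

/-- The pairing function inside `M`. -/
def pairM (M : L1Struc) (x y : M.carrier) : M.carrier :=
  M.add (M.mul (M.add x y) (M.add x y)) x

/-- `j : ℕ → M` is an embedding of the standard model into `M`. -/
def L1Embed (M : L1Struc) (j : ℕ → M.carrier) : Prop :=
  j 0 = M.zero ∧ j 1 = M.one ∧
  (∀ a b : ℕ, j (a + b) = M.add (j a) (j b)) ∧
  (∀ a b : ℕ, j (a * b) = M.mul (j a) (j b)) ∧
  (∀ a b : ℕ, a < b ↔ M.lt (j a) (j b)) ∧
  Function.Injective j

/-- `M` and the embedded standard model satisfy the same existential `L₁`-sentences with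
parameters from `ℕ`. -/
def OneElementaryOverStd (M : L1Struc) (j : ℕ → M.carrier) : Prop :=
  ∀ φ, IsExistentialL1 φ → ∀ v : ℕ → ℕ,
    (φ.Sat stdM Set.univ v (fun _ => (∅ : Set ℕ)) ↔
     φ.Sat M Set.univ (fun i => j (v i)) (fun _ => (∅ : Set M.carrier)))

/-- `A` is `M`-finite: Δ⁰₁-definable over `M` (without set parameters) and bounded. -/
def MFinite (M : L1Struc) (A : Set M.carrier) : Prop :=
  A ∈ Mcl M (∅ : Set (Set M.carrier)) ∧ ∃ b, ∀ x ∈ A, M.lt x b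

/-- A total coloring (coded as the set `X` of codes of pairs colored `1`) extends the
condition `(m, p)` of the forcing notion `P_M`: it agrees with `p` below `m`, and colors
`(x,y)` with `1` whenever `x < m ≤ y`. -/
def ExtendsCond (M : L1Struc) (m : M.carrier) (p : Set M.carrier) (X : Set M.carrier) : Prop :=
  (∀ x y, M.lt x y → M.lt y m → (pairM M x y ∈ X ↔ pairM M x y ∈ p)) ∧
  (∀ x y, M.lt x m → ¬ M.lt y m → M.lt x y → pairM M x y ∈ X)

end SOA

namespace SOA

/-! ### Auxiliary development for Statement 16 -/

section Stmt16Aux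

/-- Pairing `(x+v)^2 + x`, matching `pairT`/`pairM` over the standard model. -/
def pairN (x v : ℕ) : ℕ := (x + v) * (x + v) + x

lemma le_pairN (x v : ℕ) : x ≤ pairN x v := Nat.le_add_left x _

lemma pairN_inj {x v y w : ℕ} (h : pairN x v = pairN y w) : x = y ∧ v = w := by
  have key : ∀ a b c d : ℕ, a + b < c + d → pairN a b < pairN c d := by
    intro a b c d hlt
    have h1 : pairN a b < (a + b + 1) * (a + b + 1) := by
      have : a < a + b + 1 := by omega
      unfold pairN; nlinarith
    have h2 : (a + b + 1) * (a + b + 1) ≤ (c + d) * (c + d) := by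
      have : a + b + 1 ≤ c + d := hlt
      exact Nat.mul_le_mul this this
    unfold pairN at *; omega
  have hsum : x + v = y + w := by
    rcases lt_trichotomy (x + v) (y + w) with hc | hc | hc
    · exact absurd (key _ _ _ _ hc) (by omega)
    · exact hc
    · exact absurd (key _ _ _ _ hc) (by omega)
  have hx : x = y := by unfold pairN at h; rw [hsum] at h; omega
  exact ⟨hx, by omega⟩

/-- Cantor decomposition: every `e` is `⟨i,j⟩` for some `i,j`. -/
lemma cantor_surj (e : ℕ) : ∃ i j : ℕ, e + e = (i+j)*(i+j) + (i+j) + (i+i) := by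
  induction e with
  | zero => exact ⟨0, 0, rfl⟩
  | succ e ih =>
    obtain ⟨i, j, h⟩ := ih
    cases j with
    | zero => exact ⟨0, i + 1, by nlinarith⟩
    | succ j' => exact ⟨i + 1, j', by nlinarith⟩

lemma cantor_unique {i j i' j' e : ℕ}
    (h : e + e = (i+j)*(i+j) + (i+j) + (i+i))
    (h' : e + e = (i'+j')*(i'+j') + (i'+j') + (i'+i')) : i = i' ∧ j = j' := by
  have key : ∀ a b a' b' : ℕ, a + b < a' + b' →
      (a+b)*(a+b) + (a+b) + (a+a) < (a'+b')*(a'+b') + (a'+b') + (a'+a') := by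
    intro a b a' b' hlt
    have h1 : a ≤ a + b := Nat.le_add_right a b
    have h2 : a + b + 1 ≤ a' + b' := hlt
    nlinarith
  have hs : i + j = i' + j' := by
    rcases lt_trichotomy (i+j) (i'+j') with hc | hc | hc
    · exact absurd (key _ _ _ _ hc) (by omega)
    · exact hc
    · exact absurd (key _ _ _ _ hc) (by omega)
  have hi : i = i' := by rw [hs] at h; omega
  exact ⟨hi, by omega⟩

/-- A choice of Cantor decomposition. -/
noncomputable def cpair (e : ℕ) : ℕ × ℕ :=
  ((cantor_surj e).choose, (cantor_surj e).choose_spec.choose)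

lemma cpair_spec (e : ℕ) :
    e + e = ((cpair e).1 + (cpair e).2) * ((cpair e).1 + (cpair e).2)
      + ((cpair e).1 + (cpair e).2) + ((cpair e).1 + (cpair e).1) :=
  (cantor_surj e).choose_spec.choose_spec

end Stmt16Aux

section Stmt16Sem

/-- Term values depend only on free variables. -/
lemma Term.val_update_of_notin {x : ℕ} {t : Term} (h : x ∉ t.fv)
    (v : ℕ → ℕ) (a : ℕ) : t.val stdM (Function.update v x a) = t.val stdM v := by
  induction t with
  | var i =>
    have : x ≠ i := by simpa [Term.fv] using h
    simp [Term.val, Function.update_of_ne (Ne.symm this)]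
  | zero => rfl
  | one => rfl
  | add t s iht ihs =>
    have ht : x ∉ t.fv := fun hx => h (Or.inl hx)
    have hs : x ∉ s.fv := fun hx => h (Or.inr hx)
    simp [Term.val, iht ht, ihs hs]
  | mul t s iht ihs =>
    have ht : x ∉ t.fv := fun hx => h (Or.inl hx)
    have hs : x ∉ s.fv := fun hx => h (Or.inr hx)
    simp [Term.val, iht ht, ihs hs]

/-- Δ⁰₀ formulas have finite use in their set parameters, over the standard model. -/
lemma delta0_use {φ : Formula} (h : IsDelta0 φ) :
    ∀ v : ℕ → ℕ, ∃ B : ℕ, ∀ V V' : ℕ → Set ℕ,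
      (∀ i, ∀ x < B, (x ∈ V i ↔ x ∈ V' i)) →
      (φ.Sat stdM Set.univ v V ↔ φ.Sat stdM Set.univ v V') := by
  induction h with
  | eq t s => intro v; exact ⟨0, fun V V' _ => Iff.rfl⟩
  | lt t s => intro v; exact ⟨0, fun V V' _ => Iff.rfl⟩
  | mem t X =>
    intro v
    refine ⟨t.val stdM v + 1, fun V V' hag => ?_⟩
    exact hag X _ (Nat.lt_succ_self _)
  | not h ih =>
    intro v; obtain ⟨B, hB⟩ := ih v
    exact ⟨B, fun V V' hag => not_congr (hB V V' hag)⟩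
  | and h1 h2 ih1 ih2 =>
    intro v; obtain ⟨B1, hB1⟩ := ih1 v; obtain ⟨B2, hB2⟩ := ih2 v
    refine ⟨max B1 B2, fun V V' hag => ?_⟩
    have hag1 : ∀ i, ∀ x < B1, (x ∈ V i ↔ x ∈ V' i) :=
      fun i x hx => hag i x (lt_of_lt_of_le hx (le_max_left _ _))
    have hag2 : ∀ i, ∀ x < B2, (x ∈ V i ↔ x ∈ V' i) :=
      fun i x hx => hag i x (lt_of_lt_of_le hx (le_max_right _ _))
    exact and_congr (hB1 V V' hag1) (hB2 V V' hag2)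
  | or h1 h2 ih1 ih2 =>
    intro v; obtain ⟨B1, hB1⟩ := ih1 v; obtain ⟨B2, hB2⟩ := ih2 v
    refine ⟨max B1 B2, fun V V' hag => ?_⟩
    have hag1 : ∀ i, ∀ x < B1, (x ∈ V i ↔ x ∈ V' i) :=
      fun i x hx => hag i x (lt_of_lt_of_le hx (le_max_left _ _))
    have hag2 : ∀ i, ∀ x < B2, (x ∈ V i ↔ x ∈ V' i) :=
      fun i x hx => hag i x (lt_of_lt_of_le hx (le_max_right _ _))
    exact or_congr (hB1 V V' hag1) (hB2 V V' hag2)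
  | imp h1 h2 ih1 ih2 =>
    intro v; obtain ⟨B1, hB1⟩ := ih1 v; obtain ⟨B2, hB2⟩ := ih2 v
    refine ⟨max B1 B2, fun V V' hag => ?_⟩
    have hag1 : ∀ i, ∀ x < B1, (x ∈ V i ↔ x ∈ V' i) :=
      fun i x hx => hag i x (lt_of_lt_of_le hx (le_max_left _ _))
    have hag2 : ∀ i, ∀ x < B2, (x ∈ V i ↔ x ∈ V' i) :=
      fun i x hx => hag i x (lt_of_lt_of_le hx (le_max_right _ _))
    exact imp_congr (hB1 V V' hag1) (hB2 V V' hag2)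
  | @ballLt φ x t hx hφ ih =>
    intro v
    choose F hF using ih
    refine ⟨(Finset.range (t.val stdM v)).sup (fun a => F (Function.update v x a)),
      fun V V' hag => ?_⟩
    have key : ∀ a < t.val stdM v,
        (φ.Sat stdM Set.univ (Function.update v x a) V ↔
         φ.Sat stdM Set.univ (Function.update v x a) V') := by
      intro a ha
      apply hF (Function.update v x a) V V'
      intro i y hy
      apply hag i y
      exact lt_of_lt_of_le hy (Finset.le_sup (f := fun a => F (Function.update v x a)) (Finset.mem_range.2 ha))
    constructor
    · intro hs a
      have := hs a
      simp only [Formula.Sat, Term.val, Function.update_self,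
        Term.val_update_of_notin hx] at this ⊢
      intro hlt
      exact (key a hlt).1 (this hlt)
    · intro hs a
      have := hs a
      simp only [Formula.Sat, Term.val, Function.update_self,
        Term.val_update_of_notin hx] at this ⊢
      intro hlt
      exact (key a hlt).2 (this hlt)
  | @bexLt φ x t hx hφ ih =>
    intro v
    choose F hF using ih
    refine ⟨(Finset.range (t.val stdM v)).sup (fun a => F (Function.update v x a)),
      fun V V' hag => ?_⟩
    have key : ∀ a < t.val stdM v,
        (φ.Sat stdM Set.univ (Function.update v x a) V ↔
         φ.Sat stdM Set.univ (Function.update v x a) V') := by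
      intro a ha
      apply hF (Function.update v x a) V V'
      intro i y hy
      apply hag i y
      exact lt_of_lt_of_le hy (Finset.le_sup (f := fun a => F (Function.update v x a)) (Finset.mem_range.2 ha))
    constructor
    · rintro ⟨a, ha1, ha2⟩
      refine ⟨a, ?_, ?_⟩
      · exact ha1
      · have hlt : a < t.val stdM v := by
          simpa [Formula.Sat, Term.val, Function.update_self,
            Term.val_update_of_notin hx] using ha1
        exact (key a hlt).1 ha2
    · rintro ⟨a, ha1, ha2⟩
      refine ⟨a, ?_, ?_⟩
      · exact ha1
      · have hlt : a < t.val stdM v := by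
          simpa [Formula.Sat, Term.val, Function.update_self,
            Term.val_update_of_notin hx] using ha1
        exact (key a hlt).2 ha2

/-- Σ⁰₁ persistence: a true Σ⁰₁ fact has a finite use. -/
lemma sigma01_persist {φ : Formula} (h : IsSigma01 φ) :
    ∀ (v : ℕ → ℕ) (V : ℕ → Set ℕ), φ.Sat stdM Set.univ v V →
      ∃ B : ℕ, ∀ V' : ℕ → Set ℕ, (∀ i, ∀ x < B, (x ∈ V i ↔ x ∈ V' i)) →
        φ.Sat stdM Set.univ v V' := by
  induction h with
  | delta0 h0 =>
    intro v V hsat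
    obtain ⟨B, hB⟩ := delta0_use h0 v
    exact ⟨B, fun V' hag => (hB V V' hag).1 hsat⟩
  | @exN φ x hφ ih =>
    intro v V hsat
    obtain ⟨a, ha⟩ := hsat
    obtain ⟨B, hB⟩ := ih (Function.update v x a) V ha
    exact ⟨B, fun V' hag => ⟨a, hB V' hag⟩⟩

end Stmt16Sem

section Stmt16Run

/-- Numeric value of a bit. -/
def bval (b : Bool) : ℕ := cond b 1 0

lemma bval_lt_two (b : Bool) : bval b < 2 := by cases b <;> simp [bval]

/-- The coded coloring `{⟨x, d x⟩ : x ∈ ℕ}`. -/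
def codeC (d : ℕ → Bool) : Set ℕ := {m | ∃ x, m = pairN x (bval (d x))}

lemma pairN_mem_codeC {d : ℕ → Bool} {x v : ℕ} :
    pairN x v ∈ codeC d ↔ v = bval (d x) := by
  constructor
  · rintro ⟨y, hy⟩
    obtain ⟨h1, h2⟩ := pairN_inj hy
    rw [h2, h1]
  · rintro rfl; exact ⟨x, rfl⟩

/-- Player 1's run: first the coded coloring, then singleton answers. -/
def ffRun (d : ℕ → Bool) (a : ℕ → ℕ) : ℕ → Set ℕ
  | 0 => codeC d
  | l + 1 => {a l}

lemma histL_ffRun (d : ℕ → Bool) (a : ℕ → ℕ) (m : ℕ) :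
    histL stdM (ffRun d a) m = codeC d :: (List.range m).map (fun l => ({a l} : Set ℕ)) := by
  unfold histL
  rw [List.range_succ_eq_map, List.map_cons, List.map_map]
  rfl

/-- The oracle at stage `m`: the join of the history. -/
def Orc (d : ℕ → Bool) (a : ℕ → ℕ) (m : ℕ) : Set ℕ :=
  joinList stdM (histL stdM (ffRun d a) m)

lemma Orc_eq_foldl (d : ℕ → Bool) (a : ℕ → ℕ) (m : ℕ) :
    Orc d a m = List.foldl (joinM stdM) (codeC d)
      ((List.range m).map (fun l => ({a l} : Set ℕ))) := by
  unfold Orc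
  rw [histL_ffRun]
  rfl

lemma Orc_congr {d : ℕ → Bool} {a a' : ℕ → ℕ} {m : ℕ}
    (h : ∀ l < m, a l = a' l) : Orc d a m = Orc d a' m := by
  rw [Orc_eq_foldl, Orc_eq_foldl]
  congr 1
  apply List.map_congr_left
  intro l hl
  rw [h l (List.mem_range.1 hl)]

lemma agree_codeC {B : ℕ} {d d' : ℕ → Bool} (h : ∀ y < B, d' y = d y) :
    ∀ x < B, (x ∈ codeC d ↔ x ∈ codeC d') := by
  intro x hx
  constructor
  · rintro ⟨y, hy⟩
    have : y ≤ x := hy ▸ le_pairN y _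
    exact ⟨y, by rw [h y (lt_of_le_of_lt this hx)]; exact hy⟩
  · rintro ⟨y, hy⟩
    have : y ≤ x := hy ▸ le_pairN y _
    exact ⟨y, by rw [← h y (lt_of_le_of_lt this hx)]; exact hy⟩

lemma agree_joinM {B : ℕ} {X X' Y : Set ℕ} (h : ∀ x < B, (x ∈ X ↔ x ∈ X')) :
    ∀ x < B, (x ∈ joinM stdM X Y ↔ x ∈ joinM stdM X' Y) := by
  intro x hx
  have key : ∀ Z Z' : Set ℕ, (∀ y < B, (y ∈ Z ↔ y ∈ Z')) →
      x ∈ joinM stdM Z Y → x ∈ joinM stdM Z' Y := by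
    rintro Z Z' hZZ (⟨c, hc, hcx⟩ | hr)
    · refine Or.inl ⟨c, ?_, hcx⟩
      have hx2 : x = c + c := hcx
      rw [hx2] at hx
      have : c < B := Nat.lt_of_le_of_lt (Nat.le_add_right c c) hx
      exact (hZZ c this).1 hc
    · exact Or.inr hr
  exact ⟨key X X' h, key X' X (fun y hy => (h y hy).symm)⟩

lemma agree_foldl {B : ℕ} (L : List (Set ℕ)) :
    ∀ {X X' : Set ℕ}, (∀ x < B, (x ∈ X ↔ x ∈ X')) →
      ∀ x < B, (x ∈ L.foldl (joinM stdM) X ↔ x ∈ L.foldl (joinM stdM) X') := by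
  induction L with
  | nil => intro X X' h; exact h
  | cons Y L ih =>
    intro X X' h
    exact ih (agree_joinM h)

lemma agree_Orc {B : ℕ} {d d' : ℕ → Bool} {a : ℕ → ℕ} {m : ℕ}
    (h : ∀ y < B, d' y = d y) :
    ∀ x < B, (x ∈ Orc d a m ↔ x ∈ Orc d' a m) := by
  rw [Orc_eq_foldl, Orc_eq_foldl]
  exact agree_foldl _ (agree_codeC h)

/-- Persistence of `satIdx` facts about the stage oracle, in the coloring. -/
lemma satIdx_Orc_persist {θ : Formula} (hθ : IsSigma01 θ) {i x : ℕ}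
    {d : ℕ → Bool} {a : ℕ → ℕ} {m : ℕ} (h : satIdx θ stdM i x (Orc d a m)) :
    ∃ u : ℕ, ∀ d' : ℕ → Bool, (∀ y < u, d' y = d y) → satIdx θ stdM i x (Orc d' a m) := by
  obtain ⟨B, hB⟩ := sigma01_persist hθ _ _ h
  refine ⟨B, fun d' hd' => ?_⟩
  exact hB _ (fun _ y hy => agree_Orc hd' y hy)

end Stmt16Run

section Stmt16Prob

lemma RT12_theta_eq : (RTn 1 2).theta =
    Formula.allN 1 (Formula.imp trueF (Formula.exN 0
      (Formula.and (Formula.lt (Term.var 0) (Term.ofNat 2))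
        (Formula.and (Formula.mem (pairT (Term.var 1) (Term.var 0)) 0)
          (Formula.allN 2 (Formula.imp (Formula.mem (pairT (Term.var 1) (Term.var 2)) 0)
            (Formula.eq (Term.var 2) (Term.var 0)))))))) := rfl

lemma RT12_psi_eq : (RTn 1 2).psi =
    Formula.and (infiniteF 1 2 3)
      (Formula.exN 0 (Formula.and (Formula.lt (Term.var 0) (Term.ofNat 2))
        (Formula.allN 1 (Formula.imp
          (Formula.and trueF (Formula.and (Formula.mem (Term.var 1) 1) trueF))
          (Formula.mem (pairT (Term.var 1) (Term.var 0)) 0))))) := rfl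

lemma CN_theta_eq : CN.theta =
    Formula.exN 0 (Formula.allN 1 (Formula.not (Formula.mem (pairT (Term.var 0) (Term.var 1)) 0))) := rfl

lemma CN_psi_eq : CN.psi =
    Formula.exN 0 (Formula.and (Formula.mem (Term.var 0) 1)
      (Formula.and (Formula.allN 1 (Formula.imp (Formula.mem (Term.var 1) 1)
          (Formula.eq (Term.var 1) (Term.var 0))))
        (Formula.allN 1 (Formula.not (Formula.mem (pairT (Term.var 0) (Term.var 1)) 0))))) := rfl

/-- The coded coloring is an instance of `RT¹₂`. -/
lemma RT12_inst_codeC (d : ℕ → Bool) : (RTn 1 2).Inst stdM (codeC d) := by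
  unfold Pi12Problem.Inst
  rw [RT12_theta_eq]
  simp only [Formula.Sat, Term.val, trueF, pairT, Term.ofNat, Function.update_apply]
  simp only [if_true, if_false]
  norm_num
  intro x
  refine ⟨bval (d x), by cases d x <;> simp [bval], ?_, ?_⟩
  · exact pairN_mem_codeC.2 rfl
  · intro w hw
    exact pairN_mem_codeC.1 hw

/-- Unfolding a solution of `RT¹₂`. -/
lemma RT12_sol_spec {X Y : Set ℕ} (h : (RTn 1 2).Sol stdM X Y) :
    (∀ c : ℕ, ∃ b, c < b ∧ b ∈ Y) ∧ ∃ v : ℕ, ∀ z ∈ Y, pairN z v ∈ X := by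
  unfold Pi12Problem.Sol at h
  rw [RT12_psi_eq] at h
  simp only [Formula.Sat, Term.val, trueF, pairT, Term.ofNat, infiniteF,
    Function.update_apply] at h
  norm_num at h
  obtain ⟨hinf, v, hv2, hhom⟩ := h
  exact ⟨hinf, v, fun z hz => hhom z hz⟩

/-- Unfolding an instance of `C_ℕ`. -/
lemma CN_inst_spec {W : Set ℕ} (h : CN.Inst stdM W) :
    ∃ x : ℕ, ∀ s : ℕ, pairN x s ∉ W := by
  unfold Pi12Problem.Inst at h
  rw [CN_theta_eq] at h
  simp only [Formula.Sat, Term.val, pairT, Function.update_apply] at h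
  norm_num at h
  exact h

/-- A valid number is a solution of `C_ℕ`. -/
lemma CN_sol_of {W : Set ℕ} {q : ℕ} (h : ∀ s : ℕ, pairN q s ∉ W) :
    CN.Sol stdM W ({q} : Set ℕ) := by
  unfold Pi12Problem.Sol
  rw [CN_psi_eq]
  simp only [Formula.Sat, Term.val, pairT, Function.update_apply]
  norm_num
  exact h

end Stmt16Prob

section Stmt16Game

lemma numM_std (e : ℕ) : numM stdM e = e := by
  induction e with
  | zero => rfl
  | succ e ih => show numM stdM e + 1 = e + 1; rw [ih]

lemma histL_length (f : ℕ → Set ℕ) (n : ℕ) : (histL stdM f n).length = n + 1 := by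
  simp [histL]

variable (θ : Formula) (k : Nat.Partrec.Code)

open Classical

/-- The stage-`n` index played by the strategy. -/
noncomputable def emv (m : ℕ) : ℕ := if h : (k.eval m).Dom then (k.eval m).get h else 0

noncomputable def iiv (m : ℕ) : ℕ := (cpair (emv k m)).1

/-- The set `Φ_{e_m}` computes from the stage-`m` oracle. -/
def Zset (d : ℕ → Bool) (a : ℕ → ℕ) (m : ℕ) : Set ℕ :=
  {x | satIdx θ stdM (iiv k m) x (Orc d a m)}

/-- The victory flag of the strategy's stage-`m` move. -/
def flagP (d : ℕ → Bool) (a : ℕ → ℕ) (m : ℕ) : Prop := (0 : ℕ) ∈ Zset θ k d a m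

/-- The payload of the strategy's stage-`m` move. -/
def Wset (d : ℕ → Bool) (a : ℕ → ℕ) (m : ℕ) : Set ℕ := {x | x + 1 ∈ Zset θ k d a m}

/-- The answer `q` is (eventually) enumerated out of the stage-`m` instance. -/
def killP (q : ℕ) (d : ℕ → Bool) (a : ℕ → ℕ) (m : ℕ) : Prop :=
  ∃ s, pairN q s ∈ Wset θ k d a m

/-- The run is fine for Player 1 up to stage `m`. -/
def PlanOK (d : ℕ → Bool) (a : ℕ → ℕ) (m : ℕ) : Prop :=
  ∀ l < m, ¬ flagP θ k d a l ∧ ¬ killP θ k (a l) d a l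

lemma Zset_congr {d : ℕ → Bool} {a a' : ℕ → ℕ} {m : ℕ} (h : ∀ l < m, a l = a' l) :
    Zset θ k d a m = Zset θ k d a' m := by
  unfold Zset; rw [Orc_congr h]

/-- Player 2's canonical play: the coded move whenever one exists. -/
noncomputable def ggF (f : ℕ → Set ℕ) : ℕ → Prop × Set ℕ := fun n =>
  if h : ∃ mv, CodeMove θ stdM k (histL stdM f n) mv then h.choose else (False, ∅)

/-- `Alive` for the canonical run determined by `(d, a)`. -/
def AliveP (d : ℕ → Bool) (a : ℕ → ℕ) (n : ℕ) : Prop :=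
  Alive (RTn 1 2) CN stdM (fun _ => True) (ffRun d a) (ggF θ k (ffRun d a)) n

variable {θ k}
variable (d : ℕ → Bool) (a : ℕ → ℕ)

lemma exists_mv (hH : P2CompWinsC θ k (RTn 1 2) CN stdM (fun _ => True)) :
    ∀ n, AliveP θ k d a n →
      ∃ mv, CodeMove θ stdM k (histL stdM (ffRun d a) n) mv := by
  intro n
  induction n using Nat.strong_induction_on with
  | _ n ih =>
    intro hal
    refine (hH (ffRun d a) (ggF θ k (ffRun d a))).1 n ?_ hal
    intro m hm halm
    obtain ⟨mv, hmv⟩ := ih m hm halm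
    have hex : ∃ mv, CodeMove θ stdM k (histL stdM (ffRun d a) m) mv := ⟨mv, hmv⟩
    show CodeMove θ stdM k (histL stdM (ffRun d a) m) (ggF θ k (ffRun d a) m)
    rw [ggF, dif_pos hex]
    exact hex.choose_spec

lemma run_wins (hH : P2CompWinsC θ k (RTn 1 2) CN stdM (fun _ => True)) :
    P2WinsRun (RTn 1 2) CN stdM (fun _ => True) (ffRun d a) (ggF θ k (ffRun d a)) := by
  refine (hH (ffRun d a) (ggF θ k (ffRun d a))).2 ?_
  intro n hal
  have hex := exists_mv d a hH n hal
  show CodeMove θ stdM k (histL stdM (ffRun d a) n) (ggF θ k (ffRun d a) n)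
  rw [ggF, dif_pos hex]
  exact hex.choose_spec

/-- Identification of Player 2's canonical move with the `Zset` data. -/
lemma move_eq (hH : P2CompWinsC θ k (RTn 1 2) CN stdM (fun _ => True)) {n : ℕ} (hal : AliveP θ k d a n) :
    ggF θ k (ffRun d a) n = (flagP θ k d a n, Wset θ k d a n) := by
  have hex := exists_mv d a hH n hal
  have hcm : CodeMove θ stdM k (histL stdM (ffRun d a) n) (ggF θ k (ffRun d a) n) := by
    rw [ggF, dif_pos hex]; exact hex.choose_spec
  obtain ⟨e, he, Z, hphi, hmv⟩ := hcm
  rw [histL_length] at he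
  simp only [Nat.add_sub_cancel] at he
  have hdom : (k.eval n).Dom := Part.dom_iff_mem.2 ⟨e, he⟩
  have hee : emv k n = e := by
    rw [emv, dif_pos hdom]
    exact Part.get_eq_of_mem he hdom
  rw [numM_std] at hphi
  obtain ⟨i, j, hrel, _, hZ⟩ := hphi
  have hrel' : e + e = (i+j)*(i+j) + (i+j) + (i+i) := hrel
  have hii : i = iiv k n := by
    rw [iiv, hee]
    exact (cantor_unique hrel' (cpair_spec e)).1
  have hZeq : Z = Zset θ k d a n := by
    ext x
    rw [hZ x, hii]
    rfl
  rw [hmv, hZeq]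
  rfl

/-- Aliveness propagates as long as Player 1's plan is fine. -/
lemma alive_of_plan (hH : P2CompWinsC θ k (RTn 1 2) CN stdM (fun _ => True)) {m : ℕ} (hplan : PlanOK θ k d a m) :
    ∀ n ≤ m, AliveP θ k d a n := by
  intro n hn
  induction n with
  | zero =>
    exact ⟨RT12_inst_codeC d, trivial⟩
  | succ n ih =>
    have hal : AliveP θ k d a n := ih (le_trans (Nat.le_succ n) hn)
    have hmv := move_eq d a hH hal
    have hcw := (run_wins d a hH).1 n hal
    have hnm : n < m := hn
    obtain ⟨hnf, hnk⟩ := hplan n hnm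
    rcases hcw with hcont | hwin
    · obtain ⟨h1, h2, h3⟩ := hcont
      refine ⟨hal, h1, h2, h3, ?_, trivial⟩
      show CN.Sol stdM ((ggF θ k (ffRun d a) n).2) ({a n} : Set ℕ)
      rw [hmv]
      exact CN_sol_of (fun s hs => hnk ⟨s, hs⟩)
    · exfalso
      apply hnf
      have := hwin.1
      rw [hmv] at this
      exact this

/-- Victory for Player 1 by a spoiled win move. -/
lemma victory_flag (hH : P2CompWinsC θ k (RTn 1 2) CN stdM (fun _ => True)) {m : ℕ} (hplan : PlanOK θ k d a m) (hfl : flagP θ k d a m)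
    (hns : ¬ (RTn 1 2).Sol stdM (codeC d) (Wset θ k d a m)) : False := by
  have hal := alive_of_plan d a hH hplan m le_rfl
  have hmv := move_eq d a hH hal
  have hcw := (run_wins d a hH).1 m hal
  rcases hcw with hcont | hwin
  · have := hcont.1
    rw [hmv] at this
    exact this hfl
  · apply hns
    have := hwin.2.2
    rw [hmv] at this
    exact this

/-- Victory for Player 1 by an illegal instance. -/
lemma victory_empty (hH : P2CompWinsC θ k (RTn 1 2) CN stdM (fun _ => True)) {m : ℕ} (hplan : PlanOK θ k d a m) (hfl : ¬ flagP θ k d a m)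
    (hkill : ∀ q, killP θ k q d a m) : False := by
  have hal := alive_of_plan d a hH hplan m le_rfl
  have hmv := move_eq d a hH hal
  have hcw := (run_wins d a hH).1 m hal
  rcases hcw with hcont | hwin
  · have hinst := hcont.2.2
    rw [hmv] at hinst
    obtain ⟨x, hx⟩ := CN_inst_spec hinst
    obtain ⟨s, hs⟩ := hkill x
    exact hx s hs
  · apply hfl
    have := hwin.1
    rw [hmv] at this
    exact this

/-- Victory for Player 1 by an infinite run. -/
lemma victory_infinite (hH : P2CompWinsC θ k (RTn 1 2) CN stdM (fun _ => True)) (hplan : ∀ m, PlanOK θ k d a m) : False := by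
  apply (run_wins d a hH).2
  intro n
  exact alive_of_plan d a hH (hplan n) n le_rfl

end Stmt16Game

section Stmt16Force

variable (θ : Formula) (k : Nat.Partrec.Code)

/-- `d` extends the finite condition `(u, p)`. -/
def Meets (u : ℕ) (p : ℕ → Bool) (d : ℕ → Bool) : Prop := ∀ x < u, d x = p x

/-- The answer stream determined by a finite list of answers. -/
def padL (as : List ℕ) : ℕ → ℕ := fun l => as.getD l 0

/-- The position `(u, p, as)` is coherent: every coloring meeting `(u, p)` keeps the
run fine for Player 1 through the stages answered so far. -/
def Co (u : ℕ) (p : ℕ → Bool) (as : List ℕ) : Prop :=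
  ∀ d, Meets u p d → PlanOK θ k d (padL as) as.length

variable {θ k}

lemma Meets_mono {u u' : ℕ} {p p' d : ℕ → Bool} (hu : u ≤ u')
    (hp : ∀ x < u, p' x = p x) (hd : Meets u' p' d) : Meets u p d :=
  fun x hx => by rw [hd x (lt_of_lt_of_le hx hu), hp x hx]

lemma flagP_congr {d : ℕ → Bool} {a a' : ℕ → ℕ} {m : ℕ} (h : ∀ l < m, a l = a' l) :
    flagP θ k d a m ↔ flagP θ k d a' m := by
  unfold flagP; rw [Zset_congr θ k h]

lemma killP_congr {q : ℕ} {d : ℕ → Bool} {a a' : ℕ → ℕ} {m : ℕ} (h : ∀ l < m, a l = a' l) :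
    killP θ k q d a m ↔ killP θ k q d a' m := by
  unfold killP Wset; rw [Zset_congr θ k h]

lemma padL_append_lt {as : List ℕ} {q : ℕ} {l : ℕ} (h : l < as.length) :
    padL (as ++ [q]) l = padL as l := by
  unfold padL
  exact List.getD_append _ _ _ _ h

lemma padL_append_len {as : List ℕ} {q : ℕ} :
    padL (as ++ [q]) as.length = q := by
  unfold padL
  have h := List.getD_append_right as [q] 0 as.length le_rfl
  simpa using h

/-- Persistence of the flag. -/
lemma flagP_persist (hθ : IsSigma01 θ) {d : ℕ → Bool} {a : ℕ → ℕ} {m : ℕ}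
    (h : flagP θ k d a m) :
    ∃ u, ∀ d' : ℕ → Bool, (∀ y < u, d' y = d y) → flagP θ k d' a m :=
  satIdx_Orc_persist hθ h

/-- Persistence of membership in the payload. -/
lemma Wset_persist (hθ : IsSigma01 θ) {d : ℕ → Bool} {a : ℕ → ℕ} {m x : ℕ}
    (h : x ∈ Wset θ k d a m) :
    ∃ u, ∀ d' : ℕ → Bool, (∀ y < u, d' y = d y) → x ∈ Wset θ k d' a m :=
  satIdx_Orc_persist hθ h

/-- Persistence of kill facts. -/
lemma killP_persist (hθ : IsSigma01 θ) {q : ℕ} {d : ℕ → Bool} {a : ℕ → ℕ} {m : ℕ}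
    (h : killP θ k q d a m) :
    ∃ u, ∀ d' : ℕ → Bool, (∀ y < u, d' y = d y) → killP θ k q d' a m := by
  obtain ⟨s, hs⟩ := h
  obtain ⟨u, hu⟩ := satIdx_Orc_persist hθ hs
  exact ⟨u, fun d' hd' => ⟨s, hu d' hd'⟩⟩

/-- **Main extension lemma**: every coherent position has a coherent one-step extension. -/
lemma extend_pos (hθ : IsSigma01 θ)
    (hH : P2CompWinsC θ k (RTn 1 2) CN stdM (fun _ => True))
    {u : ℕ} {p : ℕ → Bool} {as : List ℕ} (hco : Co θ k u p as) :
    ∃ (u' : ℕ) (p' : ℕ → Bool) (q : ℕ), u < u' ∧ (∀ x < u, p' x = p x) ∧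
      Co θ k u' p' (as ++ [q]) := by
  set m := as.length with hm
  by_cases hQ0 : ∃ (u₁ : ℕ) (p₁ : ℕ → Bool), (u ≤ u₁ ∧ ∀ x < u, p₁ x = p x) ∧
      ∀ d, Meets u₁ p₁ d → flagP θ k d (padL as) m
  · -- the flag can be forced: Player 1 wins outright, contradiction.
    exfalso
    obtain ⟨u₁, p₁, ⟨hu1, hp1⟩, hflag⟩ := hQ0
    by_cases hQW : ∃ (u₂ : ℕ) (p₂ : ℕ → Bool) (x : ℕ), (u₁ ≤ u₂ ∧ ∀ y < u₁, p₂ y = p₁ y) ∧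
        ∀ d, Meets u₂ p₂ d → x ∈ Wset θ k d (padL as) m
    · -- some element can be forced into the payload: spoil its color.
      obtain ⟨u₂, p₂, x, ⟨hu2, hp2⟩, hmem⟩ := hQW
      set u₃ := max u₂ (x + 1) with hu3
      set b := p₂ x with hb
      set D := (fun y => if y < u₃ then p₂ y else !b) with hD
      have hmeet2 : Meets u₂ p₂ D := by
        intro y hy
        simp only [hD, hu3, if_pos (lt_of_lt_of_le hy (le_max_left _ _))]
      have hmeet1 : Meets u₁ p₁ D := Meets_mono hu2 hp2 hmeet2
      have hmeet0 : Meets u p D := Meets_mono hu1 hp1 hmeet1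
      refine victory_flag D (padL as) hH (hco D hmeet0) (hflag D hmeet1) ?_
      intro hsol
      obtain ⟨hinf, v, hhom⟩ := RT12_sol_spec hsol
      have hxW : x ∈ Wset θ k D (padL as) m := hmem D hmeet2
      have hvx : v = bval (D x) := pairN_mem_codeC.1 (hhom x hxW)
      have hDx : D x = b := by
        simp only [hD, hu3, hb, if_pos (lt_of_lt_of_le (Nat.lt_succ_self x) (le_max_right u₂ (x+1)))]
      obtain ⟨z, hz1, hz2⟩ := hinf u₃
      have hvz : v = bval (D z) := pairN_mem_codeC.1 (hhom z hz2)
      have hDz : D z = !b := by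
        simp only [hD, if_neg (not_lt.2 (le_of_lt hz1))]
      rw [hDx] at hvx
      rw [hDz] at hvz
      have : bval b = bval (!b) := hvx.symm.trans hvz
      revert this
      cases b <;> simp [bval]
    · -- no element can be forced into the payload: it is empty.
      set D := (fun y => if y < u₁ then p₁ y else false) with hD
      have hmeet1 : Meets u₁ p₁ D := by
        intro y hy
        simp only [hD, if_pos hy]
      have hmeet0 : Meets u p D := Meets_mono hu1 hp1 hmeet1
      refine victory_flag D (padL as) hH (hco D hmeet0) (hflag D hmeet1) ?_
      intro hsol
      obtain ⟨hinf, v, hhom⟩ := RT12_sol_spec hsol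
      obtain ⟨z, _, hz2⟩ := hinf 0
      obtain ⟨u₄, h4⟩ := Wset_persist hθ hz2
      exact hQW ⟨max u₁ u₄, D, z, ⟨le_max_left _ _, fun y hy => hmeet1 y hy⟩,
        fun d' hd' => h4 d' (fun y hy => hd' y (lt_of_lt_of_le hy (le_max_right _ _)))⟩
  · -- the flag can never come up at stage `m`.
    have hnf : ∀ d, Meets u p d → ¬ flagP θ k d (padL as) m := by
      intro d hd hfl
      obtain ⟨u₄, h4⟩ := flagP_persist hθ hfl
      exact hQ0 ⟨max u u₄, d, ⟨le_max_left _ _, fun x hx => hd x hx⟩,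
        fun d' hd' => h4 d' (fun y hy => hd' y (lt_of_lt_of_le hy (le_max_right _ _)))⟩
    by_cases hQA : ∃ (u₁ : ℕ) (p₁ : ℕ → Bool) (q : ℕ), (u ≤ u₁ ∧ ∀ x < u, p₁ x = p x) ∧
        ∀ d, Meets u₁ p₁ d → ¬ killP θ k q d (padL as) m
    · -- a safe answer exists: extend the position.
      obtain ⟨u₁, p₁, q, ⟨hu1, hp1⟩, hsafe⟩ := hQA
      refine ⟨max u₁ (u + 1), p₁, q, lt_of_lt_of_le (Nat.lt_succ_self u) (le_max_right _ _),
        hp1, ?_⟩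
      intro d hd
      have hmeet1 : Meets u₁ p₁ d := fun x hx => hd x (lt_of_lt_of_le hx (le_max_left _ _))
      have hmeet0 : Meets u p d := Meets_mono hu1 hp1 hmeet1
      intro l hl
      have hl' : l < m + 1 := by simpa using hl
      have hcongr : ∀ l' < l, padL (as ++ [q]) l' = padL as l' := by
        intro l' hl'2
        exact padL_append_lt (lt_of_lt_of_le hl'2 (by omega))
      rcases Nat.lt_or_ge l m with hlm | hlm
      · obtain ⟨hf, hk⟩ := hco d hmeet0 l hlm
        constructor
        · rw [flagP_congr hcongr]
          exact hf
        · rw [padL_append_lt hlm, killP_congr hcongr]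
          exact hk
      · have hleq : l = m := by omega
        subst hleq
        constructor
        · rw [flagP_congr hcongr]
          exact hnf d hmeet0
        · rw [show padL (as ++ [q]) m = q from padL_append_len, killP_congr hcongr]
          exact hsafe d hmeet1
    · -- no safe answer anywhere: Player 1 empties the instance, contradiction.
      exfalso
      push_neg at hQA
      have hkillext : ∀ (c : ℕ × (ℕ → Bool)), (u ≤ c.1 ∧ ∀ x < u, c.2 x = p x) → ∀ q,
          ∃ c' : ℕ × (ℕ → Bool), (u ≤ c'.1 ∧ ∀ x < u, c'.2 x = p x) ∧
            c.1 < c'.1 ∧ (∀ x < c.1, c'.2 x = c.2 x) ∧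
            ∀ d, Meets c'.1 c'.2 d → killP θ k q d (padL as) m := by
        rintro ⟨u₁, p₁⟩ ⟨hu1, hp1⟩ q
        have hu1' : u ≤ u₁ := hu1
        have hp1' : ∀ x < u, p₁ x = p x := hp1
        obtain ⟨d, hd, hkd⟩ := hQA (u₁ + 1) p₁ q ⟨by omega, hp1'⟩
        obtain ⟨u₄, h4⟩ := killP_persist hθ hkd
        refine ⟨(max (u₁ + 1) u₄, d), ⟨?_, ?_⟩, ?_, ?_, ?_⟩
        · exact le_trans (by omega) (le_max_left (u₁ + 1) u₄)
        · intro x hx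
          show d x = p x
          rw [hd x (by omega)]
          exact hp1' x hx
        · exact lt_of_lt_of_le (Nat.lt_succ_self u₁) (le_max_left _ _)
        · intro x hx
          show d x = p₁ x
          exact hd x (by omega)
        · intro d' hd'
          exact h4 d' (fun y hy => hd' y (lt_of_lt_of_le hy (le_max_right _ _)))
      -- build the chain of conditions killing every answer
      let T : ℕ → {c : ℕ × (ℕ → Bool) // u ≤ c.1 ∧ ∀ x < u, c.2 x = p x} :=
        fun q => Nat.rec ⟨(u, p), le_rfl, fun _ _ => rfl⟩
          (fun q T => ⟨(hkillext T.1 T.2 q).choose, (hkillext T.1 T.2 q).choose_spec.1⟩) q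
      have hTsucc : ∀ q, (T q).1.1 < (T (q+1)).1.1 ∧
          (∀ x < (T q).1.1, (T (q+1)).1.2 x = (T q).1.2 x) ∧
          ∀ d, Meets (T (q+1)).1.1 (T (q+1)).1.2 d → killP θ k q d (padL as) m := by
        intro q
        exact (hkillext (T q).1 (T q).2 q).choose_spec.2
      have hTmono : ∀ q q', q ≤ q' → (T q).1.1 ≤ (T q').1.1 ∧
          (∀ x < (T q).1.1, (T q').1.2 x = (T q).1.2 x) := by
        intro q q' hqq
        induction q' with
        | zero =>
          have : q = 0 := by omega
          subst this; exact ⟨le_rfl, fun _ _ => rfl⟩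
        | succ q' ih =>
          rcases Nat.lt_or_ge q (q' + 1) with hlt | hge
          · have hq' : q ≤ q' := by omega
            obtain ⟨h1, h2⟩ := ih hq'
            obtain ⟨h3, h4, _⟩ := hTsucc q'
            refine ⟨le_trans h1 (le_of_lt h3), fun x hx => ?_⟩
            rw [h4 x (lt_of_lt_of_le hx h1), h2 x hx]
          · have : q = q' + 1 := by omega
            subst this; exact ⟨le_rfl, fun _ _ => rfl⟩
      have hTge : ∀ q, q ≤ (T q).1.1 := by
        intro q
        induction q with
        | zero => exact Nat.zero_le _
        | succ q ih => exact lt_of_le_of_lt ih (hTsucc q).1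
      set D := (fun x => (T (x+1)).1.2 x) with hDdef
      have hmeets : ∀ q, Meets (T q).1.1 (T q).1.2 D := by
        intro q x hx
        rcases Nat.le_total (x+1) q with hle | hge
        · exact ((hTmono (x+1) q hle).2 x (lt_of_lt_of_le (Nat.lt_succ_self x)
            (hTge (x+1)))).symm
        · exact (hTmono q (x+1) hge).2 x hx
      have hmeet0 : Meets u p D := by
        intro x hx
        have := hmeets 0
        exact this x (lt_of_lt_of_le hx (T 0).2.1) |>.trans ((T 0).2.2 x hx)
      refine victory_empty D (padL as) hH (hco D hmeet0) (hnf D hmeet0) ?_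
      intro q
      exact (hTsucc q).2.2 D (hmeets (q+1))

end Stmt16Force

section Stmt16Master

variable {θ : Formula} {k : Nat.Partrec.Code}

/-- The master contradiction: if Player 2's coded strategy wins every run over the
standard model, we obtain `False`. -/
lemma stmt16_master (hθ : IsSigma01 θ)
    (hH : P2CompWinsC θ k (RTn 1 2) CN stdM (fun _ => True)) : False := by
  classical
  have hco0 : Co θ k 0 (fun _ => false) [] := by
    intro d _ l hl
    simp [List.length_nil] at hl
  -- the step function for the tower of coherent positions
  let step : ∀ (u : ℕ) (p : ℕ → Bool) (as : List ℕ), Co θ k u p as →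
      ℕ × (ℕ → Bool) × List ℕ := fun u p as h =>
    ((extend_pos hθ hH h).choose, (extend_pos hθ hH h).choose_spec.choose,
      as ++ [(extend_pos hθ hH h).choose_spec.choose_spec.choose])
  have stepspec : ∀ (u : ℕ) (p : ℕ → Bool) (as : List ℕ) (h : Co θ k u p as),
      Co θ k (step u p as h).1 (step u p as h).2.1 (step u p as h).2.2 ∧
      u < (step u p as h).1 ∧ (∀ x < u, (step u p as h).2.1 x = p x) ∧
      (step u p as h).2.2 = as ++ [(extend_pos hθ hH h).choose_spec.choose_spec.choose] := by
    intro u p as h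
    obtain ⟨h1, h2, h3⟩ := (extend_pos hθ hH h).choose_spec.choose_spec.choose_spec
    exact ⟨h3, h1, h2, rfl⟩
  -- the tower
  let T : ℕ → {t : ℕ × (ℕ → Bool) × List ℕ // Co θ k t.1 t.2.1 t.2.2} := fun n =>
    Nat.rec ⟨(0, fun _ => false, []), hco0⟩
      (fun _ t => ⟨step t.1.1 t.1.2.1 t.1.2.2 t.2,
        (stepspec t.1.1 t.1.2.1 t.1.2.2 t.2).1⟩) n
  have hTsucc : ∀ n, (T n).1.1 < (T (n+1)).1.1 ∧
      (∀ x < (T n).1.1, (T (n+1)).1.2.1 x = (T n).1.2.1 x) ∧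
      ∃ q, (T (n+1)).1.2.2 = (T n).1.2.2 ++ [q] := by
    intro n
    obtain ⟨_, h2, h3, h4⟩ := stepspec (T n).1.1 (T n).1.2.1 (T n).1.2.2 (T n).2
    exact ⟨h2, h3, ⟨_, h4⟩⟩
  have hTlen : ∀ n, (T n).1.2.2.length = n := by
    intro n
    induction n with
    | zero => rfl
    | succ n ih =>
      obtain ⟨q, hq⟩ := (hTsucc n).2.2
      rw [hq, List.length_append, ih]
      rfl
  have hTmono : ∀ q q', q ≤ q' → (T q).1.1 ≤ (T q').1.1 ∧
      (∀ x < (T q).1.1, (T q').1.2.1 x = (T q).1.2.1 x) := by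
    intro q q' hqq
    induction q' with
    | zero =>
      have : q = 0 := by omega
      subst this; exact ⟨le_rfl, fun _ _ => rfl⟩
    | succ q' ih =>
      rcases Nat.lt_or_ge q (q' + 1) with hlt | hge
      · have hq' : q ≤ q' := by omega
        obtain ⟨h1, h2⟩ := ih hq'
        obtain ⟨h3, h4, _⟩ := hTsucc q'
        refine ⟨le_trans h1 (le_of_lt h3), fun x hx => ?_⟩
        rw [h4 x (lt_of_lt_of_le hx h1), h2 x hx]
      · have : q = q' + 1 := by omega
        subst this; exact ⟨le_rfl, fun _ _ => rfl⟩
  have hTge : ∀ n, n ≤ (T n).1.1 := by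
    intro n
    induction n with
    | zero => exact Nat.zero_le _
    | succ n ih => exact lt_of_le_of_lt ih (hTsucc n).1
  -- the limit coloring and answer stream
  set dlim := (fun x => (T (x+1)).1.2.1 x) with hdlim
  set alim := (fun l => padL (T (l+1)).1.2.2 l) with halim
  have hmeets : ∀ n, Meets (T n).1.1 (T n).1.2.1 dlim := by
    intro n x hx
    rcases Nat.le_total (x+1) n with hle | hge
    · exact ((hTmono (x+1) n hle).2 x (lt_of_lt_of_le (Nat.lt_succ_self x)
        (hTge (x+1)))).symm
    · exact (hTmono n (x+1) hge).2 x hx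
  have hasL : ∀ n l, l < n → padL (T n).1.2.2 l = alim l := by
    intro n
    induction n with
    | zero => intro l hl; omega
    | succ n ih =>
      intro l hl
      rcases Nat.lt_or_ge l n with hln | hln
      · obtain ⟨q, hq⟩ := (hTsucc n).2.2
        rw [hq, padL_append_lt (by rw [hTlen]; exact hln)]
        exact ih l hln
      · have : l = n := by omega
        subst this
        rfl
  have hplan : ∀ m, PlanOK θ k dlim alim m := by
    intro m
    have hp := (T m).2 dlim (hmeets m)
    rw [hTlen] at hp
    intro l hl
    obtain ⟨hf, hk⟩ := hp l hl
    have hcongr : ∀ l' < l, padL (T m).1.2.2 l' = alim l' :=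
      fun l' hl' => hasL m l' (lt_trans hl' hl)
    constructor
    · rw [← flagP_congr hcongr]
      exact hf
    · rw [← hasL m l hl, ← killP_congr hcongr]
      exact hk
  exact victory_infinite dlim alim hH hplan

end Stmt16Master

/-- `RT¹₂ ≰_gW C_ℕ`: Player 2 has no computable winning strategy for the reduction game
`G(C_ℕ → RT¹₂)` over the standard natural numbers (for any choice of universal Σ⁰₁
formula). -/
theorem statement16 :
    ¬ ∃ θ : Formula, UnivSigma01Std θ ∧ P2CompWinsStd θ (RTn 1 2) CN := by
  rintro ⟨θ, huniv, k, hH⟩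
  exact stmt16_master huniv.1.1 hH

end SOA
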